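/- Let c: S → X be a finite covering map of smooth manifolds and g: S → Y a smooth map to a complex manifold. Then there is a dense open subset U ⊆ X such that c^{-1}(U) is dense open in S and the restrictions of the induced maps to the surrogate over U are covering maps; more precisely, for (c,g): S → X×Y and X_φ := (c,g)(S) with induced maps h: S → X_φ and π: X_φ → X, there is a dense open U ⊆ X over which both h and π restrict to covering maps. -/

import Mathlib

open scoped Manifold
open Set Topology Filter

namespace SurrogateProof

theorem continuousOn_of_locally_const {A I : Type*} [TopologicalSpace A] [TopologicalSpace I]
    {f : A → I} {s : Set A}
    (H : ∀ a ∈ s, ∃ N, IsOpen N ∧ a ∈ N ∧ ∀ b ∈ N ∩ s, f b = f a) : ContinuousOn f s := by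
  intro a ha
  obtain ⟨N, hNo, haN, hconst⟩ := H a ha
  have hev : ∀ᶠ b in 𝓝[s] a, f b = f a := by
    filter_upwards [inter_mem_nhdsWithin s (hNo.mem_nhds haN)] with b hb
    exact hconst b ⟨hb.2, hb.1⟩
  exact (Filter.tendsto_pure.mpr hev).mono_right (pure_le_nhds _)

theorem continuousOn_prod_discrete {A I Z : Type*} [TopologicalSpace A] [TopologicalSpace I]
    [DiscreteTopology I] [TopologicalSpace Z] {F : I → A → Z} {W : Set A}
    (hF : ∀ k, ContinuousOn (F k) W) :
    ContinuousOn (fun p : A × I => F p.2 p.1) (W ×ˢ (univ : Set I)) := by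
  rintro ⟨x, k⟩ ⟨hx, -⟩
  unfold ContinuousWithinAt
  rw [nhdsWithin_prod_eq, nhdsWithin_univ, nhds_discrete I, Filter.prod_pure,
    Filter.tendsto_map'_iff]
  exact hF k x hx

theorem exists_t2_nbhd {Y H : Type*} [TopologicalSpace Y] [TopologicalSpace H] [T2Space H]
    [ChartedSpace H Y] (y : Y) :
    ∃ U : Set Y, IsOpen U ∧ y ∈ U ∧ ∀ y₁ ∈ U, ∀ y₂ ∈ U, y₁ ≠ y₂ →
      ∃ O₁ O₂ : Set Y, IsOpen O₁ ∧ IsOpen O₂ ∧ y₁ ∈ O₁ ∧ y₂ ∈ O₂ ∧ ∀ z, z ∈ O₁ → z ∉ O₂ := by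
  refine ⟨(chartAt H y).source, (chartAt H y).open_source, mem_chart_source H y, ?_⟩
  intro y₁ h₁ y₂ h₂ hne
  have hxy : (chartAt H y) y₁ ≠ (chartAt H y) y₂ := fun hEq => hne ((chartAt H y).injOn h₁ h₂ hEq)
  obtain ⟨O₁', O₂', hO₁', hO₂', m₁, m₂, hd⟩ := t2_separation hxy
  refine ⟨(chartAt H y).source ∩ (chartAt H y) ⁻¹' O₁',
    (chartAt H y).source ∩ (chartAt H y) ⁻¹' O₂',
    (chartAt H y).isOpen_inter_preimage hO₁', (chartAt H y).isOpen_inter_preimage hO₂',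
    ⟨h₁, m₁⟩, ⟨h₂, m₂⟩, ?_⟩
  intro z hz1 hz2
  exact (Set.disjoint_left.mp hd) hz1.2 hz2.2

theorem isEvenlyCovered_of_isEmpty {E B : Type*} [TopologicalSpace E] [TopologicalSpace B]
    [IsEmpty E] (f : E → B) (x : B) : IsEvenlyCovered f x (f ⁻¹' {x}) := by
  haveI : IsEmpty (f ⁻¹' {x} : Set E) := ⟨fun p => isEmptyElim p.1⟩
  exact .to_isEvenlyCovered_preimage
    (.of_preimage_eq_empty Empty Filter.univ_mem (Set.eq_empty_of_isEmpty _))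



variable {S X Y : Type*} [TopologicalSpace S] [TopologicalSpace X] [TopologicalSpace Y]

structure GoodData (c : S → X) (g : S → Y) (W : Set X) (N : ℕ) (σ : Fin N → X → S) : Prop where
  pos : 0 < N
  cont : ∀ i, ContinuousOn (σ i) W
  sec : ∀ i, ∀ x ∈ W, c (σ i x) = x
  surj : ∀ s, c s ∈ W → ∃ i, σ i (c s) = s
  inj : ∀ i j, ∀ x ∈ W, σ i x = σ j x → i = j
  sheetOpen : ∀ i, IsOpen {s | c s ∈ W ∧ σ i (c s) = s}
  dich : ∀ i j, (∀ x ∈ W, g (σ i x) = g (σ j x)) ∨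
      (∀ x ∈ W, ∃ O W', IsOpen O ∧ g (σ i x) ∈ O ∧ IsOpen W' ∧ x ∈ W' ∧
        ∀ x' ∈ W' ∩ W, g (σ j x') ∉ O)

theorem goodData_covers {c : S → X} {g : S → Y} (hcc : Continuous c) (hgc : Continuous g)
    {W : Set X} {N : ℕ} {σ : Fin N → X → S} (hW : IsOpen W) (hD : GoodData c g W N σ) :
    (∀ x ∈ W, IsEvenlyCovered (fun p : Set.range (fun s : S => (c s, g s)) => (p : X × Y).1) x
      ((fun p : Set.range (fun s : S => (c s, g s)) => (p : X × Y).1) ⁻¹' {x})) ∧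
    (∀ p : Set.range (fun s : S => (c s, g s)), (p : X × Y).1 ∈ W →
      IsEvenlyCovered (fun s : S => (⟨(c s, g s), Set.mem_range_self s⟩ :
        Set.range (fun s : S => (c s, g s)))) p
      ((fun s : S => (⟨(c s, g s), Set.mem_range_self s⟩ :
        Set.range (fun s : S => (c s, g s)))) ⁻¹' {p})) := by
  classical
  let T : Type _ := Set.range (fun s : S => (c s, g s))
  let π : T → X := fun p => (p : X × Y).1
  let hm : S → T := fun s => ⟨(c s, g s), Set.mem_range_self s⟩
  let i0 : Fin N := ⟨0, hD.pos⟩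
  let r : Fin N → Fin N → Prop := fun i j => ∀ x ∈ W, g (σ i x) = g (σ j x)
  have hrefl : ∀ i, r i i := fun i x hx => rfl
  have hsymm : ∀ {i j}, r i j → r j i := fun h x hx => (h x hx).symm
  have htrans : ∀ {i j k}, r i j → r j k → r i k := fun h1 h2 x hx => (h1 x hx).trans (h2 x hx)
  let sd : Setoid (Fin N) := ⟨r, ⟨hrefl, hsymm, htrans⟩⟩
  let I := Quotient sd
  letI : TopologicalSpace I := ⊥
  haveI hIdisc : DiscreteTopology I := ⟨rfl⟩
  have key : ∀ i j, ¬ r i j → ∀ x ∈ W, ∃ O W', IsOpen O ∧ g (σ i x) ∈ O ∧ IsOpen W' ∧ x ∈ W' ∧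
      ∀ x' ∈ W' ∩ W, g (σ j x') ∉ O := fun i j hij => (hD.dich i j).resolve_left hij
  have req_of_eq : ∀ i j x, x ∈ W → g (σ i x) = g (σ j x) → r i j := by
    intro i j x hx hxy
    by_contra hij
    obtain ⟨O, W', hO, hm1, hW', hxW', hav⟩ := key i j hij x hx
    exact hav x ⟨hxW', hx⟩ (hxy ▸ hm1)
  let cls : T → I := fun p =>
    if hp : ∃ i, g (σ i (p : X × Y).1) = (p : X × Y).2 then Quotient.mk sd hp.choose
    else Quotient.mk sd i0
  have cls_spec : ∀ (p : T) (i : Fin N), (p : X × Y).1 ∈ W →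
      g (σ i (p : X × Y).1) = (p : X × Y).2 → cls p = Quotient.mk sd i := by
    intro p i hx hgi
    have hp : ∃ i', g (σ i' (p : X × Y).1) = (p : X × Y).2 := ⟨i, hgi⟩
    have h0 : cls p = Quotient.mk sd hp.choose := dif_pos hp
    rw [h0]
    exact Quotient.sound (req_of_eq _ _ _ hx (hp.choose_spec.trans hgi.symm))
  have cls_h : ∀ (s : S) (i : Fin N), c s ∈ W → σ i (c s) = s →
      cls (hm s) = Quotient.mk sd i := by
    intro s i hcs hsi
    exact cls_spec (hm s) i hcs (by rw [hsi])
  have wit : ∀ p : T, (p : X × Y).1 ∈ W →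
      ∃ i, g (σ i ((p : X × Y).1)) = (p : X × Y).2 := by
    intro p hx
    obtain ⟨s, hs⟩ := p.2
    have hcs : c s = (p : X × Y).1 := congrArg Prod.fst hs
    have hgs : g s = (p : X × Y).2 := congrArg Prod.snd hs
    obtain ⟨i, hi⟩ := hD.surj s (by rw [hcs]; exact hx)
    exact ⟨i, by rw [← hcs, hi, hgs]⟩
  have source_open : IsOpen {p : T | (p : X × Y).1 ∈ W} :=
    hW.preimage (continuous_fst.comp continuous_subtype_val)
  have cls_cont : ContinuousOn cls {p : T | (p : X × Y).1 ∈ W} := by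
    apply continuousOn_of_locally_const
    intro p hp
    obtain ⟨ip, hgi⟩ := wit p hp
    choose O Wj hOopen hOmem hWjopen hWjmem hav using
      fun (j : {j : Fin N // ¬ r ip j}) => key ip j.1 j.2 (p : X × Y).1 hp
    refine ⟨Subtype.val ⁻¹' ((W ∩ ⋂ j, Wj j) ×ˢ (⋂ j, O j)), ?_, ?_, ?_⟩
    · exact (((hW.inter (isOpen_iInter_of_finite hWjopen)).prod
        (isOpen_iInter_of_finite hOopen))).preimage continuous_subtype_val
    · exact ⟨⟨hp, mem_iInter.mpr fun j => hWjmem j⟩, mem_iInter.mpr fun j => hgi ▸ hOmem j⟩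
    · rintro q ⟨⟨⟨hqW, hqWj⟩, hqO⟩, hq1⟩
      obtain ⟨mq, hmq⟩ := wit q hq1
      have hmri : r ip mq := by
        by_contra hbad
        refine hav ⟨mq, hbad⟩ (q : X × Y).1 ⟨mem_iInter.mp hqWj ⟨mq, hbad⟩, hq1⟩ ?_
        rw [hmq]
        exact mem_iInter.mp hqO ⟨mq, hbad⟩
      rw [cls_spec q mq hq1 hmq, cls_spec p ip hp hgi]
      exact Quotient.sound (hsymm hmri)
  let tπ : Bundle.Trivialization I π :=
    { toFun := fun p => ((p : X × Y).1, cls p)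
      invFun := fun q => hm (σ (Quotient.out q.2) q.1)
      source := {p : T | (p : X × Y).1 ∈ W}
      target := W ×ˢ (univ : Set I)
      map_source' := fun p hp => ⟨hp, mem_univ _⟩
      map_target' := by
        rintro ⟨x, k⟩ ⟨hx, -⟩
        show c (σ (Quotient.out k) x) ∈ W
        rw [hD.sec _ _ hx]; exact hx
      left_inv' := by
        intro p hp
        obtain ⟨i, hgi⟩ := wit p hp
        have hout : r (Quotient.out (cls p)) i := by
          have h1 : Quotient.mk sd (Quotient.out (cls p)) = Quotient.mk sd i := by
            rw [Quotient.out_eq, cls_spec p i hp hgi]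
          exact Quotient.exact h1
        apply Subtype.ext
        exact Prod.ext_iff.mpr ⟨hD.sec _ _ hp, (hout _ hp).trans hgi⟩
      right_inv' := by
        rintro ⟨x, k⟩ ⟨hx, -⟩
        have hcx : c (σ (Quotient.out k) x) = x := hD.sec _ _ hx
        have h2 : cls (hm (σ (Quotient.out k) x)) = k := by
          rw [cls_h _ (Quotient.out k) (by rw [hcx]; exact hx) (by rw [hcx]), Quotient.out_eq]
        exact Prod.ext_iff.mpr ⟨hcx, h2⟩
      open_source := source_open
      open_target := hW.prod isOpen_univ
      continuousOn_toFun := ContinuousOn.prodMk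
        ((continuous_fst.comp continuous_subtype_val).continuousOn) cls_cont
      continuousOn_invFun := by
        apply continuousOn_prod_discrete (F := fun k x => hm (σ (Quotient.out k) x))
        intro k
        rw [continuousOn_iff_continuous_restrict]
        apply Continuous.subtype_mk
        have hval : Continuous (fun x : W => ((x : X), g (σ (Quotient.out k) (x : X)))) := by
          apply Continuous.prodMk continuous_subtype_val
          exact (hgc.comp_continuousOn (hD.cont (Quotient.out k))).restrict
        have heq : (fun x : W => (c (σ (Quotient.out k) (x : X)), g (σ (Quotient.out k) (x : X))))
            = (fun x : W => ((x : X), g (σ (Quotient.out k) (x : X)))) := by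
          funext x
          exact Prod.ext_iff.mpr ⟨hD.sec _ _ x.2, rfl⟩
        rw [show (fun x : W => ((hm (σ (Quotient.out k) (x : X))) : X × Y))
            = (fun x : W => ((x : X), g (σ (Quotient.out k) (x : X)))) from heq]
        exact hval
      baseSet := W
      open_baseSet := hW
      source_eq := rfl
      target_eq := rfl
      proj_toFun := fun p hp => rfl }
  constructor
  · intro x hx
    exact IsEvenlyCovered.to_isEvenlyCovered_preimage (IsEvenlyCovered.of_trivialization (t := tπ) hx)
  · intro p hp
    obtain ⟨ip, hgi₀⟩ := wit p hp
    let J := {j : Fin N // r ip j}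
    letI : TopologicalSpace J := ⊥
    haveI hJdisc : DiscreteTopology J := ⟨rfl⟩
    let G : Set T := {q : T | (q : X × Y).1 ∈ W ∧ cls q = Quotient.mk sd ip}
    have hGopen : IsOpen G := by
      have h1 : G = {q : T | (q : X × Y).1 ∈ W} ∩ cls ⁻¹' {Quotient.mk sd ip} := rfl
      rw [h1]
      exact cls_cont.isOpen_inter_preimage source_open (isOpen_discrete _)
    have hmemG : ∀ s : S, c s ∈ W → ∀ j : J, σ j.1 (c s) = s → hm s ∈ G := by
      intro s hcs j hj
      refine ⟨hcs, ?_⟩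
      rw [cls_h s j.1 hcs hj]
      exact Quotient.sound (hsymm j.2)
    have hGval : ∀ q : T, q ∈ G → ∀ j : J, g (σ j.1 (q : X × Y).1) = (q : X × Y).2 := by
      intro q hq j
      obtain ⟨mq, hmq⟩ := wit q hq.1
      have h1 : r ip mq := Quotient.exact ((hq.2).symm.trans (cls_spec q mq hq.1 hmq))
      exact ((htrans (hsymm j.2) h1) _ hq.1).trans hmq
    let idx : S → J := fun s =>
      if hs : ∃ j : J, σ j.1 (c s) = s then hs.choose else ⟨ip, hrefl ip⟩
    have idx_spec : ∀ s : S, c s ∈ W → ∀ j : J, σ j.1 (c s) = s → idx s = j := by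
      intro s hcs j hj
      have hs : ∃ j' : J, σ j'.1 (c s) = s := ⟨j, hj⟩
      have h1 : idx s = hs.choose := dif_pos hs
      rw [h1]
      exact Subtype.ext (hD.inj _ _ _ hcs (hs.choose_spec.trans hj.symm))
    have hsec_ex : ∀ s : S, hm s ∈ G → ∃ j : J, σ j.1 (c s) = s := by
      intro s hs
      obtain ⟨i, hi⟩ := hD.surj s hs.1
      have h1 : cls (hm s) = Quotient.mk sd i := cls_h s i hs.1 hi
      exact ⟨⟨i, Quotient.exact ((hs.2).symm.trans h1)⟩, hi⟩
    have hmcont : Continuous hm := Continuous.subtype_mk (hcc.prodMk hgc) _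
    let th : Bundle.Trivialization J hm :=
      { toFun := fun s => (hm s, idx s)
        invFun := fun q => σ q.2.1 ((q.1 : X × Y).1)
        source := hm ⁻¹' G
        target := G ×ˢ (univ : Set J)
        map_source' := fun s hs => ⟨hs, mem_univ _⟩
        map_target' := by
          rintro ⟨q, j⟩ ⟨hq, -⟩
          have hcx : c (σ j.1 (q : X × Y).1) = (q : X × Y).1 := hD.sec _ _ hq.1
          exact hmemG _ (by rw [hcx]; exact hq.1) j (by rw [hcx])
        left_inv' := by
          intro s hs
          obtain ⟨j, hj⟩ := hsec_ex s hs
          have h1 := idx_spec s (show (hm s ∈ G) from hs).1 j hj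
          show σ (idx s).1 (c s) = s
          rw [h1]; exact hj
        right_inv' := by
          rintro ⟨q, j⟩ ⟨hq, -⟩
          have hcx : c (σ j.1 (q : X × Y).1) = (q : X × Y).1 := hD.sec _ _ hq.1
          have hgx : g (σ j.1 (q : X × Y).1) = (q : X × Y).2 := hGval q hq j
          have h1 : hm (σ j.1 (q : X × Y).1) = q := Subtype.ext (Prod.ext_iff.mpr ⟨hcx, hgx⟩)
          have h2 : idx (σ j.1 (q : X × Y).1) = j :=
            idx_spec _ (by rw [hcx]; exact hq.1) j (by rw [hcx])
          exact Prod.ext_iff.mpr ⟨h1, h2⟩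
        open_source := hGopen.preimage hmcont
        open_target := hGopen.prod isOpen_univ
        continuousOn_toFun := by
          apply ContinuousOn.prodMk hmcont.continuousOn
          apply continuousOn_of_locally_const
          intro s hs
          obtain ⟨j, hj⟩ := hsec_ex s hs
          refine ⟨{s' | c s' ∈ W ∧ σ j.1 (c s') = s'}, hD.sheetOpen j.1,
            ⟨(show (hm s ∈ G) from hs).1, hj⟩, ?_⟩
          rintro s' ⟨⟨hs'W, hs'j⟩, -⟩
          rw [idx_spec s' hs'W j hs'j, idx_spec s (show (hm s ∈ G) from hs).1 j hj]
        continuousOn_invFun := by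
          apply continuousOn_prod_discrete (F := fun (j : J) (q : T) => σ j.1 ((q : X × Y).1))
          intro j
          apply ContinuousOn.comp (hD.cont j.1)
            ((continuous_fst.comp continuous_subtype_val).continuousOn)
          intro q hq
          exact hq.1
        baseSet := G
        open_baseSet := hGopen
        source_eq := rfl
        target_eq := rfl
        proj_toFun := fun s hs => rfl }
    exact IsEvenlyCovered.to_isEvenlyCovered_preimage
      (IsEvenlyCovered.of_trivialization (t := th) ⟨hp, cls_spec p ip hp hgi₀⟩)



/-- pointwise separation property -/
def Qsep (g : S → Y) {N : ℕ} (σ : Fin N → X → S) (V : Set X) (i j : Fin N) (x : X) : Prop :=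
  ∃ O W', IsOpen O ∧ g (σ i x) ∈ O ∧ IsOpen W' ∧ x ∈ W' ∧ ∀ x' ∈ W' ∩ V, g (σ j x') ∉ O

theorem exists_goodData (c : S → X) (g : S → Y) (hc : IsCoveringMap c)
    (hcfin : ∀ x : X, (c ⁻¹' {x}).Finite) (hgc : Continuous g) [Nonempty S]
    (hY2 : ∀ y : Y, ∃ U : Set Y, IsOpen U ∧ y ∈ U ∧ ∀ y₁ ∈ U, ∀ y₂ ∈ U, y₁ ≠ y₂ →
      ∃ O₁ O₂ : Set Y, IsOpen O₁ ∧ IsOpen O₂ ∧ y₁ ∈ O₁ ∧ y₂ ∈ O₂ ∧ ∀ z, z ∈ O₁ → z ∉ O₂)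
    (x₀ : X) (V₀ : Set X) (hV₀ : IsOpen V₀) (hx₀ : x₀ ∈ V₀) (hne : (c ⁻¹' {x₀}).Nonempty) :
    ∃ (W : Set X) (N : ℕ) (σ : Fin N → X → S), IsOpen W ∧ W.Nonempty ∧ W ⊆ V₀ ∧
      GoodData c g W N σ := by
  classical
  have hdisc := (hc x₀).1
  haveI := hne.to_subtype
  obtain ⟨t, hbase⟩ : ∃ t : Bundle.Trivialization (c ⁻¹' {x₀}) c, x₀ ∈ t.baseSet :=
    ⟨_, (hc x₀).mem_toTrivialization_baseSet⟩
  haveI := hdisc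
  haveI : Fintype (c ⁻¹' {x₀} : Set S) := (hcfin x₀).fintype
  set N := Fintype.card (c ⁻¹' {x₀} : Set S) with hN
  have hNpos : 0 < N := by
    rw [hN, Fintype.card_pos_iff]
    exact ⟨(t (Classical.arbitrary S)).2⟩
  let e : (c ⁻¹' {x₀} : Set S) ≃ Fin N := Fintype.equivFin _
  let σ : Fin N → X → S := fun i x => t.toOpenPartialHomeomorph.symm (x, e.symm i)
  set V := V₀ ∩ t.baseSet with hV
  have hVopen : IsOpen V := hV₀.inter t.open_baseSet
  have hx₀V : x₀ ∈ V := ⟨hx₀, hbase⟩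
  have hVsub : V ⊆ t.baseSet := inter_subset_right
  have hsec : ∀ i, ∀ x ∈ t.baseSet, c (σ i x) = x := fun i x hx => t.proj_symm_apply' hx
  have hcont : ∀ i, ContinuousOn (σ i) t.baseSet := by
    intro i
    have h1 : ContinuousOn (t.toOpenPartialHomeomorph.symm) t.target :=
      t.toOpenPartialHomeomorph.continuousOn_symm
    exact h1.comp ((continuous_id.prodMk continuous_const).continuousOn)
      (fun x hx => t.mem_target.mpr hx)
  have hsurj : ∀ s : S, c s ∈ t.baseSet → ∃ i, σ i (c s) = s := by
    intro s hcs
    refine ⟨e (t s).2, ?_⟩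
    show t.toOpenPartialHomeomorph.symm (c s, e.symm (e (t s).2)) = s
    rw [Equiv.symm_apply_apply]
    exact t.symm_apply_mk_proj (t.mem_source.mpr hcs)
  have hinj : ∀ i j, ∀ x ∈ t.baseSet, σ i x = σ j x → i = j := by
    intro i j x hx hσ
    have h1 : t (σ i x) = (x, e.symm i) := t.apply_symm_apply (t.mem_target.mpr hx)
    have h2 : t (σ j x) = (x, e.symm j) := t.apply_symm_apply (t.mem_target.mpr hx)
    rw [hσ, h2] at h1
    exact e.symm.injective (congrArg Prod.snd h1).symm
  have hsheet : ∀ (W : Set X), IsOpen W → W ⊆ t.baseSet → ∀ i,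
      IsOpen {s | c s ∈ W ∧ σ i (c s) = s} := by
    intro W hWo hWsub i
    have heq : {s | c s ∈ W ∧ σ i (c s) = s} = t.source ∩ t ⁻¹' (W ×ˢ ({e.symm i} : Set _)) := by
      ext s
      constructor
      · rintro ⟨h1, h2⟩
        have hsrc : s ∈ t.source := t.mem_source.mpr (hWsub h1)
        have happ : t (σ i (c s)) = (c s, e.symm i) :=
          t.apply_symm_apply (t.mem_target.mpr (hWsub h1))
        rw [h2] at happ
        exact ⟨hsrc, by rw [mem_preimage, happ]; exact ⟨h1, rfl⟩⟩
      · rintro ⟨hsrc, hpre⟩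
        rw [mem_preimage] at hpre
        obtain ⟨hW1, hsnd⟩ := hpre
        have hfst : (t s).1 = c s := t.coe_fst hsrc
        have hsnd' : (t s).2 = e.symm i := hsnd
        constructor
        · rw [← hfst]; exact hW1
        · show t.toOpenPartialHomeomorph.symm (c s, e.symm i) = s
          rw [← hsnd']
          exact t.symm_apply_mk_proj hsrc
    rw [heq]
    exact t.toOpenPartialHomeomorph.isOpen_inter_preimage (hWo.prod (isOpen_discrete _))
  -- the one-pair shrinking step
  have step : ∀ (V' : Set X), IsOpen V' → V'.Nonempty → V' ⊆ V → ∀ i j : Fin N,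
      ∃ V'', IsOpen V'' ∧ V''.Nonempty ∧ V'' ⊆ V' ∧
        ((∀ x ∈ V'', g (σ i x) = g (σ j x)) ∨ (∀ x ∈ V'', Qsep g σ V i j x)) := by
    intro V' hV'o hV'ne hV'sub i j
    have ha : ContinuousOn (fun x => g (σ i x)) V' :=
      hgc.comp_continuousOn ((hcont i).mono (hV'sub.trans hVsub))
    have hb : ContinuousOn (fun x => g (σ j x)) V' :=
      hgc.comp_continuousOn ((hcont j).mono (hV'sub.trans hVsub))
    have hbV : ContinuousOn (fun x => g (σ j x)) V :=
      hgc.comp_continuousOn ((hcont j).mono hVsub)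
    by_cases hQ : ∃ x ∈ V', Qsep g σ V i j x
    · obtain ⟨x, hxV', O, W', hOo, haO, hW'o, hxW', hav⟩ := hQ
      refine ⟨(V' ∩ (fun x => g (σ i x)) ⁻¹' O) ∩ W',
        (ha.isOpen_inter_preimage hV'o hOo).inter hW'o,
        ⟨x, ⟨hxV', haO⟩, hxW'⟩, fun y hy => hy.1.1, Or.inr ?_⟩
      rintro y ⟨⟨hyV', hyO⟩, hyW'⟩
      exact ⟨O, W', hOo, hyO, hW'o, hyW', hav⟩
    · push_neg at hQ
      have mkQ : ∀ x ∈ V', ∀ (U : Set Y),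
          (∀ y₁ ∈ U, ∀ y₂ ∈ U, y₁ ≠ y₂ → ∃ O₁ O₂ : Set Y, IsOpen O₁ ∧ IsOpen O₂ ∧ y₁ ∈ O₁ ∧
            y₂ ∈ O₂ ∧ ∀ z, z ∈ O₁ → z ∉ O₂) →
          g (σ i x) ∈ U → g (σ j x) ∈ U → g (σ i x) ≠ g (σ j x) → Qsep g σ V i j x := by
        intro x hx U hU hiU hjU hne
        obtain ⟨O₁, O₂, hO₁, hO₂, m₁, m₂, hdisj⟩ := hU _ hiU _ hjU hne
        refine ⟨O₁, V ∩ (fun x => g (σ j x)) ⁻¹' O₂, hO₁, m₁,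
          hbV.isOpen_inter_preimage hVopen hO₂, ⟨hV'sub hx, m₂⟩, ?_⟩
        rintro x' ⟨⟨-, hx'O₂⟩, -⟩ hmem
        exact hdisj _ hmem hx'O₂
      by_cases hE : ∃ x ∈ V', g (σ i x) = g (σ j x)
      · obtain ⟨x, hxV', hxeq⟩ := hE
        obtain ⟨U, hUo, hyU, hU2⟩ := hY2 (g (σ i x))
        have hA1o : IsOpen (V' ∩ (fun x => g (σ i x)) ⁻¹' U) :=
          ha.isOpen_inter_preimage hV'o hUo
        refine ⟨(V' ∩ (fun x => g (σ i x)) ⁻¹' U) ∩ (fun x => g (σ j x)) ⁻¹' U,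
          (hb.mono inter_subset_left).isOpen_inter_preimage hA1o hUo,
          ⟨x, ⟨hxV', hyU⟩, show g (σ j x) ∈ U by rw [← hxeq]; exact hyU⟩,
          fun y hy => hy.1.1, Or.inl ?_⟩
        rintro y ⟨⟨hyV', hyiU⟩, hyjU⟩
        by_contra hne
        exact hQ y hyV' (mkQ y hyV' U hU2 hyiU hyjU hne)
      · exfalso
        push_neg at hE
        obtain ⟨x₁, hx₁⟩ := hV'ne
        obtain ⟨U, hUo, hyU, hU2⟩ := hY2 (g (σ i x₁))
        have hAo : IsOpen (V' ∩ (fun x => g (σ i x)) ⁻¹' U) :=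
          ha.isOpen_inter_preimage hV'o hUo
        have hbA : ∀ x ∈ V' ∩ (fun x => g (σ i x)) ⁻¹' U, g (σ j x) ∉ U := by
          intro x hxA hjU
          exact hQ x hxA.1 (mkQ x hxA.1 U hU2 hxA.2 hjU (hE x hxA.1))
        have hnQ := hQ x₁ hx₁
        rw [Qsep] at hnQ
        push_neg at hnQ
        obtain ⟨x', hx', hx'O⟩ := hnQ U (V' ∩ (fun x => g (σ i x)) ⁻¹' U) hUo hyU hAo ⟨hx₁, hyU⟩
        exact hbA x' hx'.1 hx'O
  -- iterate over all pairs
  have iter : ∀ (L : List (Fin N × Fin N)), ∃ V'', IsOpen V'' ∧ V''.Nonempty ∧ V'' ⊆ V ∧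
      ∀ p ∈ L, (∀ x ∈ V'', g (σ p.1 x) = g (σ p.2 x)) ∨ (∀ x ∈ V'', Qsep g σ V p.1 p.2 x) := by
    intro L
    induction L with
    | nil => exact ⟨V, hVopen, ⟨x₀, hx₀V⟩, subset_rfl, by simp⟩
    | cons hd tl ih =>
      obtain ⟨V₁, h1o, h1ne, h1sub, h1all⟩ := ih
      obtain ⟨V₂, h2o, h2ne, h2sub, h2dich⟩ := step V₁ h1o h1ne h1sub hd.1 hd.2
      refine ⟨V₂, h2o, h2ne, h2sub.trans h1sub, ?_⟩
      intro p hp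
      rcases List.mem_cons.mp hp with h | h
      · subst h
        exact h2dich
      · rcases h1all p h with heq | hq
        · exact Or.inl (fun x hx => heq x (h2sub hx))
        · exact Or.inr (fun x hx => hq x (h2sub hx))
  obtain ⟨Wf, hWfo, hWfne, hWfsub, hWfdich⟩ := iter ((List.finRange N) ×ˢ (List.finRange N))
  have hWfV : Wf ⊆ t.baseSet := hWfsub.trans hVsub
  refine ⟨Wf, N, σ, hWfo, hWfne, hWfsub.trans inter_subset_left, ?_⟩
  refine ⟨hNpos, fun i => (hcont i).mono hWfV, fun i x hx => hsec i x (hWfV hx),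
    fun s hcs => hsurj s (hWfV hcs), fun i j x hx hσ => hinj i j x (hWfV hx) hσ,
    hsheet Wf hWfo hWfV, ?_⟩
  intro i j
  rcases hWfdich (i, j)
      (List.mem_product.mpr ⟨List.mem_finRange i, List.mem_finRange j⟩)
    with heq | hq
  · exact Or.inl heq
  · refine Or.inr (fun x hx => ?_)
    obtain ⟨O, W', hOo, hmem, hW'o, hxW', hav⟩ := hq x hx
    exact ⟨O, W', hOo, hmem, hW'o, hxW', fun x' hx' => hav x' ⟨hx'.1, hWfsub hx'.2⟩⟩


end SurrogateProof

open scoped Manifold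
open Set SurrogateProof

/-- Let `c : S → X` be a finite covering map of smooth `n`-manifolds and `g : S → Y` a
smooth map to a complex manifold `Y`.  Let `X_φ := (c,g)(S) ⊆ X × Y` be the surrogate,
with induced maps `h : S → X_φ`, `h(s) = (c(s), g(s))`, and `π : X_φ → X` the
restriction of the first projection.  Then there is a dense open subset `U ⊆ X` such
that `c⁻¹(U)` is dense (and open) in `S` and both `π` (over `U`) and `h` (over
`π⁻¹(U)`) restrict to covering maps. -/
theorem surrogate_generically_covers
    {n m : ℕ} {S X Y : Type*}
    [TopologicalSpace S] [ChartedSpace (EuclideanSpace ℝ (Fin n)) S]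
    [IsManifold (𝓡 n) (⊤ : ℕ∞) S]
    [TopologicalSpace X] [ChartedSpace (EuclideanSpace ℝ (Fin n)) X]
    [IsManifold (𝓡 n) (⊤ : ℕ∞) X]
    [TopologicalSpace Y] [ChartedSpace (EuclideanSpace ℂ (Fin m)) Y]
    [IsManifold (𝓘(ℝ, EuclideanSpace ℂ (Fin m))) (⊤ : ℕ∞) Y]
    (c : S → X) (hc : IsCoveringMap c) (hcfin : ∀ x : X, (c ⁻¹' {x}).Finite)
    (hcsmooth : ContMDiff (𝓡 n) (𝓡 n) (⊤ : ℕ∞) c)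
    (g : S → Y) (hg : ContMDiff (𝓡 n) (𝓘(ℝ, EuclideanSpace ℂ (Fin m))) (⊤ : ℕ∞) g) :
    ∃ U : Set X, IsOpen U ∧ Dense U ∧ Dense (c ⁻¹' U) ∧
      IsCoveringMapOn
        (fun p : Set.range (fun s : S => (c s, g s)) => (p : X × Y).1) U ∧
      IsCoveringMapOn
        (fun s : S => (⟨(c s, g s), Set.mem_range_self s⟩ :
          Set.range (fun s : S => (c s, g s))))
        ((fun p : Set.range (fun s : S => (c s, g s)) => (p : X × Y).1) ⁻¹' U) := by
  classical
  cases isEmpty_or_nonempty S with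
  | inl hS =>
    haveI : IsEmpty ↥(Set.range (fun s : S => (c s, g s))) :=
      ⟨fun p => Exists.elim p.2 (fun s _ => isEmptyElim s)⟩
    refine ⟨univ, isOpen_univ, dense_univ, by rw [Set.preimage_univ]; exact dense_univ,
      fun x _ => isEvenlyCovered_of_isEmpty _ x, fun p _ => isEmptyElim p⟩
  | inr hS =>
    haveI := hS
    have hY2 : ∀ y : Y, ∃ U : Set Y, IsOpen U ∧ y ∈ U ∧ ∀ y₁ ∈ U, ∀ y₂ ∈ U, y₁ ≠ y₂ →
        ∃ O₁ O₂ : Set Y, IsOpen O₁ ∧ IsOpen O₂ ∧ y₁ ∈ O₁ ∧ y₂ ∈ O₂ ∧ ∀ z, z ∈ O₁ → z ∉ O₂ :=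
      fun y => exists_t2_nbhd (H := EuclideanSpace ℂ (Fin m)) y
    set U : Set X := {x | ∃ (W : Set X) (N : ℕ) (σ : Fin N → X → S),
      IsOpen W ∧ x ∈ W ∧ GoodData c g W N σ} with hU
    have hUopen : IsOpen U := by
      rw [isOpen_iff_forall_mem_open]
      rintro x ⟨W, N, σ, hWo, hxW, hD⟩
      exact ⟨W, fun x' hx' => ⟨W, N, σ, hWo, hx', hD⟩, hWo, hxW⟩
    set U' : Set X := U ∪ (closure (range c))ᶜ with hU'
    have hrange : ∀ p : Set.range (fun s : S => (c s, g s)), (p : X × Y).1 ∉ (closure (range c))ᶜ := by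
      intro p hp
      obtain ⟨s, hs⟩ := p.2
      exact hp (subset_closure ⟨s, congrArg Prod.fst hs⟩)
    have hUdense : Dense U' := by
      rw [dense_iff_inter_open]
      rintro V₀ hV₀o ⟨x₀, hx₀⟩
      by_cases hcl : x₀ ∈ closure (range c)
      · obtain ⟨x₂, hx₂V, s₂, rfl⟩ := mem_closure_iff.mp hcl V₀ hV₀o hx₀
        obtain ⟨W, N, σ, hWo, hWne, hWsub, hD⟩ :=
          exists_goodData c g hc hcfin hg.continuous hY2 (c s₂) V₀ hV₀o hx₂V ⟨s₂, rfl⟩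
        obtain ⟨x₁, hx₁⟩ := hWne
        exact ⟨x₁, hWsub hx₁, Or.inl ⟨W, N, σ, hWo, hx₁, hD⟩⟩
      · exact ⟨x₀, hx₀, Or.inr hcl⟩
    have hpre : Dense (c ⁻¹' U') := by
      rw [dense_iff_inter_open]
      rintro O hOo ⟨s, hs⟩
      have h1 : (c '' O ∩ U').Nonempty :=
        hUdense.inter_open_nonempty (c '' O) (hc.isOpenMap O hOo)
          ⟨c s, mem_image_of_mem c hs⟩
      obtain ⟨x, ⟨s', hs'O, hcs'⟩, hxU⟩ := h1
      exact ⟨s', hs'O, show c s' ∈ U' by rw [hcs']; exact hxU⟩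
    refine ⟨U', hUopen.union isClosed_closure.isOpen_compl, hUdense, hpre, ?_, ?_⟩
    · rintro x (⟨W, N, σ, hWo, hxW, hD⟩ | hx)
      · exact (goodData_covers hc.continuous hg.continuous hWo hD).1 x hxW
      · exact .to_isEvenlyCovered_preimage (.of_preimage_eq_empty Empty
          (isClosed_closure.isOpen_compl.mem_nhds hx)
          (Set.eq_empty_of_forall_notMem fun p hp => hrange p hp))
    · rintro p (hp | hp)
      · obtain ⟨W, N, σ, hWo, hxW, hD⟩ := hp
        exact (goodData_covers hc.continuous hg.continuous hWo hD).2 p hxW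
      · exact absurd hp (hrange p)
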